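/- Let D be an integral domain over a field k admitting a nontrivial exponential map, and let D[W] be a polynomial ring in one variable over D. Then the Derksen invariant of D[W] equals D[W], i.e. D[W] is generated as a k-algebra by the rings of invariants of nontrivial exponential maps on D[W]. -/

import Mathlib

open Polynomial

/-- An exponential map on a `k`-algebra `B`: a `k`-algebra homomorphism
`φ : B → B[U]` with `ε₀ ∘ φ = id` and the coaction condition `φ_V φ_U = φ_{U+V}`. -/
structure ExpMap (k B : Type*) [CommRing k] [CommRing B] [Algebra k B] where
  toAlgHom : B →ₐ[k] Polynomial B
  eval_zero : ∀ b, (toAlgHom b).eval 0 = b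
  coaction : ∀ b, (toAlgHom b).map toAlgHom.toRingHom =
    (toAlgHom b).eval₂ (Polynomial.C.comp Polynomial.C)
      (Polynomial.X + Polynomial.C Polynomial.X)

namespace ExpMap

variable {k B : Type*} [CommRing k] [CommRing B] [Algebra k B]

/-- The ring of invariants `B^φ = {b ∈ B : φ(b) = b}` of an exponential map. -/
noncomputable def fixed (φ : ExpMap k B) : Subalgebra k B :=
  AlgHom.equalizer φ.toAlgHom Polynomial.CAlgHom

/-- An exponential map is nontrivial if `B^φ ≠ B`. -/
def IsNontrivial (φ : ExpMap k B) : Prop := φ.fixed ≠ ⊤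

end ExpMap

/-- The Makar-Limanov invariant: the intersection of the rings of invariants of all
exponential maps on `B`. -/
noncomputable def ML (k B : Type*) [CommRing k] [CommRing B] [Algebra k B] : Subalgebra k B :=
  ⨅ φ : ExpMap k B, φ.fixed

/-- The Derksen invariant: the `k`-subalgebra of `B` generated by the rings of invariants
of all nontrivial exponential maps on `B`. -/
noncomputable def DK (k B : Type*) [CommRing k] [CommRing B] [Algebra k B] : Subalgebra k B :=
  Algebra.adjoin k (⋃ φ ∈ {φ : ExpMap k B | φ.IsNontrivial}, (φ.fixed : Set B))

section Aux

variable {k D : Type*} [CommRing k] [CommRing D] [Algebra k D]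

/-- the translation ring hom `p(W) ↦ p(W+U)` -/
noncomputable def shiftRH (D : Type*) [CommRing D] : Polynomial D →+* Polynomial (Polynomial D) :=
  eval₂RingHom (C.comp C) (X + C X)

@[simp] lemma shiftRH_C (a : D) : shiftRH D (C a) = C (C a) := by
  simp [shiftRH]

@[simp] lemma shiftRH_X : shiftRH D X = X + C X := by
  simp [shiftRH]

/-- The translation exponential map on `D[W]`. -/
noncomputable def shiftExp (k D : Type*) [CommRing k] [CommRing D] [Algebra k D] :
    ExpMap k (Polynomial D) where
  toAlgHom :=
    { shiftRH D with
      commutes' := fun c => by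
        simp [Polynomial.algebraMap_apply, RingHom.toFun_eq_coe] }
  eval_zero := by
    intro b
    have key : (evalRingHom (0 : Polynomial D)).comp (shiftRH D) = RingHom.id _ := by
      apply ringHom_ext <;> simp
    simpa using RingHom.congr_fun key b
  coaction := by
    intro b
    have key : (mapRingHom (shiftRH D)).comp (shiftRH D) =
        (eval₂RingHom (S := Polynomial (Polynomial (Polynomial D)))
            (C.comp C : Polynomial D →+* Polynomial (Polynomial (Polynomial D)))
            (X + C X)).comp (shiftRH D) := by
      apply ringHom_ext
      · intro a; simp
      · simp; ring
    simpa using RingHom.congr_fun key b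

end Aux

section Aux2

variable {k D : Type*} [CommRing k] [CommRing D] [Algebra k D]

/-- the coefficientwise extension of an exponential map on `D` to `D[W]`, fixing `W` -/
noncomputable def liftRH (φ : ExpMap k D) : Polynomial D →+* Polynomial (Polynomial D) :=
  eval₂RingHom ((mapRingHom C).comp φ.toAlgHom.toRingHom) (C X)

@[simp] lemma liftRH_C (φ : ExpMap k D) (a : D) :
    liftRH φ (C a) = (φ.toAlgHom a).map C := by simp [liftRH]

@[simp] lemma liftRH_X (φ : ExpMap k D) : liftRH φ X = C X := by simp [liftRH]

/-- The lifted exponential map on `D[W]`. -/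
noncomputable def liftExp (φ : ExpMap k D) : ExpMap k (Polynomial D) where
  toAlgHom :=
    { liftRH φ with
      commutes' := fun c => by
        simp [Polynomial.algebraMap_apply, RingHom.toFun_eq_coe, AlgHom.commutes] }
  eval_zero := by
    intro b
    have key : (evalRingHom (0 : Polynomial D)).comp (liftRH φ) = RingHom.id _ := by
      apply ringHom_ext
      · intro a
        simp only [RingHom.comp_apply, liftRH_C, coe_evalRingHom, RingHom.id_apply,
          ← coeff_zero_eq_eval_zero, coeff_map]
        rw [coeff_zero_eq_eval_zero, φ.eval_zero]
      · simp
    simpa using RingHom.congr_fun key b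
  coaction := by
    intro b
    have hcomp : (liftRH φ).comp C = (mapRingHom C).comp φ.toAlgHom.toRingHom := by
      ext a; simp
    have key : (mapRingHom (liftRH φ)).comp (liftRH φ) =
        (eval₂RingHom (S := Polynomial (Polynomial (Polynomial D)))
          (C.comp C : Polynomial D →+* Polynomial (Polynomial (Polynomial D)))
          (X + C X)).comp (liftRH φ) := by
      apply ringHom_ext
      · intro a
        simp only [RingHom.comp_apply, liftRH_C, coe_mapRingHom, coe_eval₂RingHom]
        rw [map_map, hcomp, ← map_map, ← coe_mapRingHom (mapRingHom C), φ.coaction a,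
          hom_eval₂, eval₂_map]
        congr 1
        · ext d; simp
        · simp
      · simp
    simpa using RingHom.congr_fun key b

end Aux2

/-- If a `k`-domain `D` is not rigid (admits a nontrivial exponential map), then the Derksen
invariant of the polynomial ring `D[W]` is all of `D[W]`. -/
theorem stmt6 {k D : Type*} [Field k] [CommRing D] [IsDomain D] [Algebra k D]
    (hD : ∃ φ : ExpMap k D, φ.IsNontrivial) :
    DK k (Polynomial D) = ⊤ := by
  obtain ⟨φ₀, hφ₀⟩ := hD
  -- W is fixed by the lifted map
  have hXfix : (X : Polynomial D) ∈ (liftExp φ₀).fixed := by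
    show (liftExp φ₀).toAlgHom X = CAlgHom X
    simp [liftExp, CAlgHom]
  -- constants are fixed by the shift map
  have hCfix : ∀ a : D, (C a : Polynomial D) ∈ (shiftExp k D).fixed := by
    intro a
    show (shiftExp k D).toAlgHom (C a) = CAlgHom (C a)
    simp [shiftExp, CAlgHom]
  -- the lifted map is nontrivial
  have hlift : (liftExp φ₀).IsNontrivial := by
    rw [ExpMap.IsNontrivial, Ne, Algebra.eq_top_iff] at hφ₀ ⊢
    push_neg at hφ₀ ⊢
    obtain ⟨d, hd⟩ := hφ₀
    refine ⟨C d, ?_⟩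
    rw [ExpMap.fixed, AlgHom.mem_equalizer] at hd ⊢
    intro h
    apply hd
    have h' : (φ₀.toAlgHom d).map C = (C d : Polynomial D).map C := by
      simpa [liftExp, CAlgHom] using h
    have := map_injective (C : D →+* Polynomial D) C_injective h'
    simpa [CAlgHom] using this
  -- the shift map is nontrivial
  have hshift : (shiftExp k D).IsNontrivial := by
    rw [ExpMap.IsNontrivial, Ne, Algebra.eq_top_iff]
    push_neg
    refine ⟨X, ?_⟩
    rw [ExpMap.fixed, AlgHom.mem_equalizer]
    intro h
    have h' : (X : Polynomial (Polynomial D)) + C X = C X := by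
      simpa [shiftExp, CAlgHom] using h
    have : (X : Polynomial (Polynomial D)) = 0 := by
      have := add_right_cancel (b := (C X : Polynomial (Polynomial D))) (a := X) (c := 0)
      simpa using h'
    exact X_ne_zero this
  -- generators are in DK
  have hXmem : (X : Polynomial D) ∈ DK k (Polynomial D) :=
    Algebra.subset_adjoin (Set.mem_biUnion hlift hXfix)
  have hCmem : ∀ a : D, (C a : Polynomial D) ∈ DK k (Polynomial D) := fun a =>
    Algebra.subset_adjoin (Set.mem_biUnion hshift (hCfix a))
  rw [eq_top_iff]
  rintro p -
  induction p using Polynomial.induction_on with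
  | C a => exact hCmem a
  | add p q hp hq => exact add_mem hp hq
  | monomial n a ih =>
    rw [pow_succ, ← mul_assoc]
    exact mul_mem ih hXmem
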